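/- Let 0 < a < 1 and 0 < s ≤ 1, and set Δ = (4 - a²)(4 - a² - s²)(a² + s²). Define v₃ = c + i d where c = (1/4)(a(6 - a² - s²) - √Δ) and d = (2 - s² - a c)/√(4 - a²). Then |v₃ - a| = 1; that is, v₃ lies on the circle of radius 1 centered at a and on the line L(z_0, s) = { c + i d : d√(4 - a²) = -a c + 2 - s² }. -/

import Mathlib

open Complex

/-- Lemma 2 (formula for `v₃`): the point `v₃ = c + id` with
`c = (1/4)(a(6-a²-s²) - √Δ)`, `Δ = (4-a²)(4-a²-s²)(a²+s²)`, and
`d = (2-s²-ac)/√(4-a²)` lies on the circle `|z - a| = 1` and on the line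
`L(z₀,s) : d√(4-a²) = -ac + 2 - s²`. -/
theorem stmt_4 (a s : ℝ) (ha : 0 < a) (ha1 : a < 1) (hs : 0 < s) (hs1 : s ≤ 1)
    (Δ : ℝ) (hΔ : Δ = (4 - a ^ 2) * (4 - a ^ 2 - s ^ 2) * (a ^ 2 + s ^ 2))
    (c d : ℝ)
    (hc : c = (a * (6 - a ^ 2 - s ^ 2) - Real.sqrt Δ) / 4)
    (hd : d = (2 - s ^ 2 - a * c) / Real.sqrt (4 - a ^ 2))
    (v₃ : ℂ) (hv₃ : v₃ = (c : ℝ) + (d : ℝ) * I) :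
    ‖v₃ - (a : ℝ)‖ = 1 ∧ d * Real.sqrt (4 - a ^ 2) = -(a * c) + 2 - s ^ 2 := by
  have h4 : (0:ℝ) < 4 - a ^ 2 := by nlinarith
  have hsq : 0 < Real.sqrt (4 - a ^ 2) := Real.sqrt_pos.mpr h4
  have hsq2 : Real.sqrt (4 - a ^ 2) ^ 2 = 4 - a ^ 2 := Real.sq_sqrt h4.le
  have h1 : (0:ℝ) < 4 - a ^ 2 - s ^ 2 := by nlinarith
  have h2 : (0:ℝ) < a ^ 2 + s ^ 2 := by positivity
  have hΔ0 : 0 ≤ Δ := by rw [hΔ]; exact (mul_pos (mul_pos h4 h1) h2).le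
  have ht : Real.sqrt Δ ^ 2 = Δ := Real.sq_sqrt hΔ0
  have hline : d * Real.sqrt (4 - a ^ 2) = -(a * c) + 2 - s ^ 2 := by
    rw [hd]
    field_simp
    ring
  have hkey : (c - a) ^ 2 + d ^ 2 = 1 := by
    have hd2 : d ^ 2 = (2 - s ^ 2 - a * c) ^ 2 / (4 - a ^ 2) := by
      rw [hd, div_pow, hsq2]
    rw [hd2]
    field_simp
    rw [hc, hΔ] at *
    nlinarith [ht, hΔ]
  refine ⟨?_, hline⟩
  rw [hv₃]
  have : ((c:ℂ) + (d:ℂ) * I - (a:ℂ)) = ⟨c - a, d⟩ := by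
    apply Complex.ext <;> simp
  rw [this]
  rw [Complex.norm_def, Complex.normSq_mk]
  have : (c - a) * (c - a) + d * d = 1 := by nlinarith [hkey]
  rw [this, Real.sqrt_one]
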